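/- Suppose H is an 8-divisible set of 60 points spanning PG(k-1,2), and every hyperplane contains a number of points of H congruent to 4 modulo 8 (i.e., the spectrum is supported on multiplicities 4 + 8i). Then k ≥ 8, and if k = 8 the spectrum is uniquely determined: a_36 = 60, a_28 = 195, and a_i = 0 otherwise. -/

import Mathlib

open Classical Module

noncomputable instance (k : ℕ) : Fintype ((Fin k → ZMod 2) →ₗ[ZMod 2] ZMod 2) :=
  haveI : Finite ((Fin k → ZMod 2) →ₗ[ZMod 2] ZMod 2) :=
    Finite.of_injective _ (DFunLike.coe_injective (F := (Fin k → ZMod 2) →ₗ[ZMod 2] ZMod 2))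
  Fintype.ofFinite _

private lemma spec60_finrankD (k : ℕ) :
    Module.finrank (ZMod 2) ((Fin k → ZMod 2) →ₗ[ZMod 2] ZMod 2) = k := by
  rw [show Module.finrank (ZMod 2) ((Fin k → ZMod 2) →ₗ[ZMod 2] ZMod 2)
      = Module.finrank (ZMod 2) (Fin k → ZMod 2) from Subspace.dual_finrank_eq,
    Module.finrank_fin_fun]

private lemma spec60_cardD (k : ℕ) :
    Fintype.card ((Fin k → ZMod 2) →ₗ[ZMod 2] ZMod 2) = 2 ^ k := by
  rw [card_eq_pow_finrank (K := ZMod 2), ZMod.card, spec60_finrankD]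

private lemma spec60_card_ker {k : ℕ} {W : Type} [AddCommGroup W] [Module (ZMod 2) W] [Fintype W]
    (f : ((Fin k → ZMod 2) →ₗ[ZMod 2] ZMod 2) →ₗ[ZMod 2] W) (hf : Function.Surjective f)
    (p : ((Fin k → ZMod 2) →ₗ[ZMod 2] ZMod 2) → Prop) (hp : ∀ φ, p φ ↔ f φ = 0) :
    (Finset.univ.filter p).card * Fintype.card W = 2 ^ k := by
  have h1 : (Finset.univ.filter p).card = Fintype.card {φ // p φ} :=
    (Fintype.card_subtype p).symm
  have h1' : Fintype.card {φ // p φ} = Fintype.card (LinearMap.ker f) := by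
    rw [Fintype.card_eq_nat_card, Fintype.card_eq_nat_card]
    exact Nat.card_congr (Equiv.subtypeEquivRight
      (fun φ => (hp φ).trans (LinearMap.mem_ker).symm))
  have h2 : Fintype.card (LinearMap.ker f) = 2 ^ Module.finrank (ZMod 2) (LinearMap.ker f) := by
    rw [card_eq_pow_finrank (K := ZMod 2), ZMod.card]
  have h3 : Fintype.card W = 2 ^ Module.finrank (ZMod 2) W := by
    rw [card_eq_pow_finrank (K := ZMod 2), ZMod.card]
  have h4 : Module.finrank (ZMod 2) (LinearMap.range f) = Module.finrank (ZMod 2) W := by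
    rw [LinearMap.range_eq_top.2 hf, finrank_top]
  have h5 := LinearMap.finrank_range_add_finrank_ker f
  rw [spec60_finrankD, h4] at h5
  rw [h1, h1', h2, h3, ← pow_add]
  congr 1
  omega

private lemma spec60_zmod2_cases (c : ZMod 2) : c = 0 ∨ c = 1 := by fin_cases c; exacts [Or.inl rfl, Or.inr rfl]

private lemma spec60_exists_dual_one {k : ℕ} (x : Fin k → ZMod 2) (hx : x ≠ 0) :
    ∃ φ : (Fin k → ZMod 2) →ₗ[ZMod 2] ZMod 2, φ x = 1 := by
  obtain ⟨i, hi⟩ := Function.ne_iff.1 hx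
  refine ⟨LinearMap.proj i, ?_⟩
  simpa using (spec60_zmod2_cases (x i)).resolve_left hi

private lemma spec60_exists_dual_pair {k : ℕ} (x y : Fin k → ZMod 2)
    (hx : x ≠ 0) (hy : y ≠ 0) (hxy : x ≠ y) :
    ∃ φ : (Fin k → ZMod 2) →ₗ[ZMod 2] ZMod 2, φ x = 1 ∧ φ y = 0 := by
  have hns : x ∉ Submodule.span (ZMod 2) ({y} : Set (Fin k → ZMod 2)) := by
    rw [Submodule.mem_span_singleton]
    rintro ⟨c, rfl⟩
    rcases spec60_zmod2_cases c with rfl | rfl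
    · simp at hx
    · simp at hxy
  have hyx : x ∉ ({y} : Set (Fin k → ZMod 2)) := by
    simp; rintro rfl; exact hxy rfl
  have hs : LinearIndepOn (ZMod 2) id ({x, y} : Set (Fin k → ZMod 2)) := by
    rw [show ({x, y} : Set (Fin k → ZMod 2)) = insert x {y} from rfl,
      linearIndepOn_id_insert hyx]
    exact ⟨(linearIndepOn_singleton_iff (ZMod 2)).2 hy, hns⟩
  let b := Module.Basis.extend hs
  have hxe : x ∈ hs.extend (Set.subset_univ _) := hs.subset_extend _ (by simp)
  have hye : y ∈ hs.extend (Set.subset_univ _) := hs.subset_extend _ (by simp)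
  refine ⟨b.coord ⟨x, hxe⟩, ?_, ?_⟩
  · have h0 := Basis.extend_apply_self hs ⟨x, hxe⟩
    have h1 : b.repr x = b.repr (b ⟨x, hxe⟩) := congrArg _ h0.symm
    rw [Basis.coord_apply, h1, Basis.repr_self]
    simp
  · have h0 := Basis.extend_apply_self hs ⟨y, hye⟩
    have h1 : b.repr y = b.repr (b ⟨y, hye⟩) := congrArg _ h0.symm
    rw [Basis.coord_apply, h1, Basis.repr_self, Finsupp.single_apply]
    simp only [ite_eq_right_iff]
    intro h
    exact absurd (congrArg Subtype.val h).symm hxy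

/-- count of all functionals vanishing on a fixed nonzero vector -/
private lemma spec60_count_one {k : ℕ} (x : Fin k → ZMod 2) (hx : x ≠ 0) :
    (Finset.univ.filter (fun φ : (Fin k → ZMod 2) →ₗ[ZMod 2] ZMod 2 => φ x = 0)).card * 2
      = 2 ^ k := by
  obtain ⟨φ₀, hφ₀⟩ := spec60_exists_dual_one x hx
  have hsurj : Function.Surjective (Module.Dual.eval (ZMod 2) (Fin k → ZMod 2) x) := by
    intro c
    exact ⟨c • φ₀, by simp [hφ₀]⟩
  have := spec60_card_ker (Module.Dual.eval (ZMod 2) (Fin k → ZMod 2) x) hsurj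
    (fun φ => φ x = 0) (fun φ => by simp)
  rw [ZMod.card, Finset.filter_congr_decidable] at this
  exact this

/-- count of all functionals vanishing on two fixed distinct nonzero vectors -/
private lemma spec60_count_two {k : ℕ} (x y : Fin k → ZMod 2)
    (hx : x ≠ 0) (hy : y ≠ 0) (hxy : x ≠ y) :
    (Finset.univ.filter (fun φ : (Fin k → ZMod 2) →ₗ[ZMod 2] ZMod 2 =>
        φ x = 0 ∧ φ y = 0)).card * 4 = 2 ^ k := by
  obtain ⟨φ₁, hφ₁x, hφ₁y⟩ := spec60_exists_dual_pair x y hx hy hxy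
  obtain ⟨φ₂, hφ₂y, hφ₂x⟩ := spec60_exists_dual_pair y x hy hx hxy.symm
  set f : ((Fin k → ZMod 2) →ₗ[ZMod 2] ZMod 2) →ₗ[ZMod 2] (ZMod 2 × ZMod 2) :=
    LinearMap.prod (Module.Dual.eval (ZMod 2) (Fin k → ZMod 2) x)
      (Module.Dual.eval (ZMod 2) (Fin k → ZMod 2) y) with hf
  have hsurj : Function.Surjective f := by
    rintro ⟨c, d⟩
    refine ⟨c • φ₁ + d • φ₂, ?_⟩
    simp [hf, Module.Dual.eval, hφ₁x, hφ₁y, hφ₂x, hφ₂y]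
  have := spec60_card_ker f hsurj
    (fun φ => φ x = 0 ∧ φ y = 0) (fun φ => by simp [hf, Prod.ext_iff])
  rw [show Fintype.card (ZMod 2 × ZMod 2) = 4 by simp [ZMod.card]] at this
  rw [Finset.filter_congr_decidable] at this
  exact this

private lemma spec60_term_nonneg {m : ℕ} (h : m % 8 = 4) :
    0 ≤ ((m : ℤ) - 28) * ((m : ℤ) - 36) := by
  rcases le_or_gt m 28 with h1 | h1
  · have h1' : (m : ℤ) ≤ 28 := by exact_mod_cast h1
    have := mul_nonneg (show (0:ℤ) ≤ 28 - (m:ℤ) by omega) (show (0:ℤ) ≤ 36 - (m:ℤ) by omega)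
    nlinarith [this]
  · have h2 : 36 ≤ m := by omega
    have h2' : (36 : ℤ) ≤ (m : ℤ) := by exact_mod_cast h2
    exact mul_nonneg (by omega) (by omega)

/-- An 8-divisible spanning set of 60 points in PG(k-1,2) whose hyperplane
multiplicities are all ≡ 4 (mod 8) forces k ≥ 8; for k = 8 the spectrum is
a_36 = 60, a_28 = 195 and a_i = 0 otherwise. -/
theorem spectrum_60_points (k : ℕ)
    (S : Finset (Fin k → ZMod 2)) (h0 : ∀ x ∈ S, x ≠ 0)
    (hcard : S.card = 60)
    (hspan : Submodule.span (ZMod 2) (S : Set (Fin k → ZMod 2)) = ⊤)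
    (hmod : ∀ φ : (Fin k → ZMod 2) →ₗ[ZMod 2] ZMod 2, φ ≠ 0 →
      (S.filter (fun x => φ x = 0)).card % 8 = 4)
    (a : ℕ → ℕ)
    (ha : ∀ j, a j = Set.ncard {φ : (Fin k → ZMod 2) →ₗ[ZMod 2] ZMod 2 |
      φ ≠ 0 ∧ (S.filter (fun x => φ x = 0)).card = j}) :
    8 ≤ k ∧
    (k = 8 → a 36 = 60 ∧ a 28 = 195 ∧
      ∀ j, j ≠ 36 → j ≠ 28 → a j = 0) := by
  classical
  -- first : k ≥ 6 from the cardinality of S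
  have hVcard : Fintype.card (Fin k → ZMod 2) = 2 ^ k := by
    rw [Fintype.card_fun, ZMod.card, Fintype.card_fin]
  have hk6 : 6 ≤ k := by
    have hsub : S ⊆ Finset.univ.erase 0 := fun x hx =>
      Finset.mem_erase.2 ⟨h0 x hx, Finset.mem_univ x⟩
    have h1 : S.card ≤ 2 ^ k - 1 := by
      have := Finset.card_le_card hsub
      rwa [Finset.card_erase_of_mem (Finset.mem_univ 0), Finset.card_univ, hVcard] at this
    by_contra hk
    have : (2 : ℕ) ^ k ≤ 2 ^ 5 := Nat.pow_le_pow_right (by norm_num) (by omega)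
    norm_num at this
    omega
  obtain ⟨e, rfl⟩ : ∃ e, k = e + 2 := ⟨k - 2, by omega⟩
  have he4 : 4 ≤ e := by omega
  set D := (Fin (e + 2) → ZMod 2) →ₗ[ZMod 2] ZMod 2 with hD
  set nn : D → ℕ := fun φ => (S.filter (fun x => φ x = 0)).card with hnn
  set P : Finset D := Finset.univ.filter (fun φ => φ ≠ 0) with hPdef
  -- cardinality of P
  have hPcard : P.card = 2 ^ (e + 2) - 1 := by
    rw [hPdef, Finset.filter_ne', Finset.card_erase_of_mem (Finset.mem_univ 0),
      Finset.card_univ, spec60_cardD]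
  -- counts restricted to nonzero functionals
  have hsingle : ∀ x ∈ S, (P.filter (fun φ => φ x = 0)).card = 2 ^ (e + 1) - 1 := by
    intro x hx
    have hc : (Finset.univ.filter (fun φ : D => φ x = 0)).card = 2 ^ (e + 1) := by
      have := spec60_count_one x (h0 x hx)
      have h2 : (2 : ℕ) ^ (e + 2) = 2 ^ (e + 1) * 2 := by ring
      rw [h2] at this
      exact Nat.eq_of_mul_eq_mul_right (by norm_num) this
    have heq : P.filter (fun φ => φ x = 0)
        = (Finset.univ.filter (fun φ : D => φ x = 0)).erase 0 := by
      ext φ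
      simp [hPdef, Finset.mem_filter, Finset.mem_erase]
    have h0mem : (0 : D) ∈ Finset.univ.filter (fun φ : D => φ x = 0) :=
      Finset.mem_filter.2 ⟨Finset.mem_univ _, LinearMap.zero_apply x⟩
    rw [heq, Finset.card_erase_of_mem h0mem, hc]
  have hpair : ∀ x ∈ S, ∀ y ∈ S, x ≠ y →
      (P.filter (fun φ => φ x = 0 ∧ φ y = 0)).card = 2 ^ e - 1 := by
    intro x hx y hy hxy
    have hc : (Finset.univ.filter (fun φ : D => φ x = 0 ∧ φ y = 0)).card = 2 ^ e := by
      have := spec60_count_two x y (h0 x hx) (h0 y hy) hxy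
      have h2 : (2 : ℕ) ^ (e + 2) = 2 ^ e * 4 := by ring
      rw [h2] at this
      exact Nat.eq_of_mul_eq_mul_right (by norm_num) this
    have heq : P.filter (fun φ => φ x = 0 ∧ φ y = 0)
        = (Finset.univ.filter (fun φ : D => φ x = 0 ∧ φ y = 0)).erase 0 := by
      ext φ
      simp [hPdef, Finset.mem_filter, Finset.mem_erase]
    have h0mem : (0 : D) ∈ Finset.univ.filter (fun φ : D => φ x = 0 ∧ φ y = 0) :=
      Finset.mem_filter.2 ⟨Finset.mem_univ _, ⟨LinearMap.zero_apply x, LinearMap.zero_apply y⟩⟩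
    rw [heq, Finset.card_erase_of_mem h0mem, hc]
  -- first standard sum
  have hSum1 : ∑ φ ∈ P, nn φ = 60 * (2 ^ (e + 1) - 1) := by
    calc ∑ φ ∈ P, nn φ = ∑ φ ∈ P, ∑ x ∈ S, (if φ x = 0 then 1 else 0) := by
          refine Finset.sum_congr rfl fun φ _ => ?_
          rw [hnn]
          exact Finset.card_filter _ _
      _ = ∑ x ∈ S, ∑ φ ∈ P, (if φ x = 0 then 1 else 0) := Finset.sum_comm
      _ = ∑ x ∈ S, (P.filter (fun φ => φ x = 0)).card := by
          refine Finset.sum_congr rfl fun x _ => ?_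
          exact (Finset.card_filter _ _).symm
      _ = ∑ x ∈ S, (2 ^ (e + 1) - 1) := Finset.sum_congr rfl hsingle
      _ = 60 * (2 ^ (e + 1) - 1) := by rw [Finset.sum_const, hcard, smul_eq_mul]
  -- second standard sum
  have hSum2 : ∑ φ ∈ P, nn φ * nn φ
      = 60 * ((2 ^ (e + 1) - 1) + 59 * (2 ^ e - 1)) := by
    calc ∑ φ ∈ P, nn φ * nn φ
        = ∑ φ ∈ P, ∑ x ∈ S, ∑ y ∈ S, (if φ x = 0 ∧ φ y = 0 then 1 else 0) := by
          refine Finset.sum_congr rfl fun φ _ => ?_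
          rw [hnn]
          simp only [Finset.card_filter]
          rw [Finset.sum_mul_sum]
          refine Finset.sum_congr rfl fun x _ => Finset.sum_congr rfl fun y _ => ?_
          by_cases h1 : φ x = 0 <;> by_cases h2 : φ y = 0 <;> simp [h1, h2]
      _ = ∑ x ∈ S, ∑ φ ∈ P, ∑ y ∈ S, (if φ x = 0 ∧ φ y = 0 then 1 else 0) := Finset.sum_comm
      _ = ∑ x ∈ S, ∑ y ∈ S, ∑ φ ∈ P, (if φ x = 0 ∧ φ y = 0 then 1 else 0) := by
          exact Finset.sum_congr rfl fun x _ => Finset.sum_comm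
      _ = ∑ x ∈ S, ∑ y ∈ S, (P.filter (fun φ => φ x = 0 ∧ φ y = 0)).card := by
          refine Finset.sum_congr rfl fun x _ => Finset.sum_congr rfl fun y _ => ?_
          exact (Finset.card_filter _ _).symm
      _ = ∑ x ∈ S, ((2 ^ (e + 1) - 1) + 59 * (2 ^ e - 1)) := by
          refine Finset.sum_congr rfl fun x hx => ?_
          rw [← Finset.add_sum_erase S _ hx]
          congr 1
          · have : (P.filter (fun φ => φ x = 0 ∧ φ x = 0))
                = (P.filter (fun φ => φ x = 0)) := by
              refine Finset.filter_congr fun φ _ => ?_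
              simp
            rw [this, hsingle x hx]
          · have hstep : ∀ y ∈ S.erase x,
                (P.filter (fun φ => φ x = 0 ∧ φ y = 0)).card = 2 ^ e - 1 := by
              intro y hy
              have hyS := Finset.mem_of_mem_erase hy
              have hxy : x ≠ y := fun h => (Finset.mem_erase.1 hy).1 h.symm
              have := hpair x hx y hyS hxy
              exact this
            rw [Finset.sum_congr rfl hstep, Finset.sum_const,
              Finset.card_erase_of_mem hx, hcard, smul_eq_mul]
      _ = 60 * ((2 ^ (e + 1) - 1) + 59 * (2 ^ e - 1)) := by
          rw [Finset.sum_const, hcard, smul_eq_mul]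
  -- cast everything to ℤ
  have hone1 : (1 : ℕ) ≤ 2 ^ (e + 1) := Nat.one_le_two_pow
  have hone2 : (1 : ℕ) ≤ 2 ^ e := Nat.one_le_two_pow
  have hone3 : (1 : ℕ) ≤ 2 ^ (e + 2) := Nat.one_le_two_pow
  have hS1z : ∑ φ ∈ P, (nn φ : ℤ) = 60 * (2 ^ (e + 1) - 1) := by
    rw [← Nat.cast_sum, hSum1]
    push_cast [hone1]
    ring
  have hS2z : ∑ φ ∈ P, (nn φ : ℤ) * (nn φ : ℤ)
      = 60 * ((2 ^ (e + 1) - 1) + 59 * (2 ^ e - 1)) := by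
    have : ∑ φ ∈ P, (nn φ : ℤ) * (nn φ : ℤ) = ((∑ φ ∈ P, nn φ * nn φ : ℕ) : ℤ) := by
      push_cast
      rfl
    rw [this, hSum2]
    push_cast [hone1, hone2]
    ring
  have hPz : (P.card : ℤ) = 2 ^ (e + 2) - 1 := by
    rw [hPcard]
    push_cast [hone3]
    ring
  -- the key quadratic sum
  set T : ℤ := ∑ φ ∈ P, ((nn φ : ℤ) - 28) * ((nn φ : ℤ) - 36) with hTdef
  have hT : T = 12 * 2 ^ e - 768 := by
    have hexp : ∀ φ ∈ P, ((nn φ : ℤ) - 28) * ((nn φ : ℤ) - 36)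
        = (nn φ : ℤ) * (nn φ : ℤ) - 64 * (nn φ : ℤ) + 1008 := fun φ _ => by ring
    rw [hTdef, Finset.sum_congr rfl hexp]
    rw [Finset.sum_add_distrib, Finset.sum_sub_distrib, ← Finset.mul_sum,
      Finset.sum_const, nsmul_eq_mul, hS1z, hS2z, hPz]
    ring
  have hTnn : 0 ≤ T := by
    refine Finset.sum_nonneg fun φ hφ => ?_
    have hφne : φ ≠ 0 := (Finset.mem_filter.1 hφ).2
    exact spec60_term_nonneg (hmod φ hφne)
  -- conclude k ≥ 8
  have he64 : 64 ≤ 2 ^ e := by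
    have : (64 : ℤ) ≤ 2 ^ e := by omega
    exact_mod_cast this
  have hk8 : 8 ≤ e + 2 := by
    by_contra hk
    have : (2 : ℕ) ^ e ≤ 2 ^ 5 := Nat.pow_le_pow_right (by norm_num) (by omega)
    norm_num at this
    omega
  refine ⟨hk8, fun hke => ?_⟩
  -- now k = 8, e = 6
  have he6 : e = 6 := by omega
  subst he6
  have hT0 : T = 0 := by rw [hT]; norm_num
  have hzero : ∀ φ ∈ P, ((nn φ : ℤ) - 28) * ((nn φ : ℤ) - 36) = 0 := by
    intro φ hφ
    refine (Finset.sum_eq_zero_iff_of_nonneg fun ψ hψ => ?_).1 (hTdef ▸ hT0) φ hφ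
    exact spec60_term_nonneg (hmod ψ (Finset.mem_filter.1 hψ).2)
  have hdich : ∀ φ ∈ P, nn φ = 28 ∨ nn φ = 36 := by
    intro φ hφ
    rcases mul_eq_zero.1 (hzero φ hφ) with h | h
    · left; have : (nn φ : ℤ) = 28 := by omega
      exact_mod_cast this
    · right; have : (nn φ : ℤ) = 36 := by omega
      exact_mod_cast this
  -- spectrum via finsets
  have haf : ∀ j, a j = (P.filter (fun φ => nn φ = j)).card := by
    intro j
    rw [ha j, show {φ : D | φ ≠ 0 ∧ (S.filter (fun x => φ x = 0)).card = j}
        = ↑(P.filter (fun φ => nn φ = j)) by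
      ext φ
      simp [hPdef, hnn]]
    exact Set.ncard_coe_finset _
  have hza : ∀ j, j ≠ 36 → j ≠ 28 → a j = 0 := by
    intro j hj36 hj28
    rw [haf j, Finset.card_eq_zero, Finset.filter_eq_empty_iff]
    intro φ hφ
    rcases hdich φ hφ with h | h <;> omega
  have hsplit : (P.filter (fun φ => nn φ = 28)).card
      + (P.filter (fun φ => ¬ nn φ = 28)).card = P.card :=
    Finset.card_filter_add_card_filter_not _
  have hcongr : P.filter (fun φ => ¬ nn φ = 28) = P.filter (fun φ => nn φ = 36) := by
    refine Finset.filter_congr fun φ hφ => ?_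
    rcases hdich φ hφ with h | h <;> simp [h]
  have hP255 : P.card = 255 := by rw [hPcard]; norm_num
  have hsumsplit : ∑ φ ∈ P, nn φ
      = ∑ φ ∈ P.filter (fun φ => nn φ = 28), nn φ
        + ∑ φ ∈ P.filter (fun φ => ¬ nn φ = 28), nn φ :=
    (Finset.sum_filter_add_sum_filter_not _ _ _).symm
  have hc28 : ∑ φ ∈ P.filter (fun φ => nn φ = 28), nn φ
      = 28 * (P.filter (fun φ => nn φ = 28)).card := by
    rw [Finset.sum_congr rfl fun φ hφ => (Finset.mem_filter.1 hφ).2,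
      Finset.sum_const, smul_eq_mul, mul_comm]
  have hc36 : ∑ φ ∈ P.filter (fun φ => ¬ nn φ = 28), nn φ
      = 36 * (P.filter (fun φ => nn φ = 36)).card := by
    rw [hcongr, Finset.sum_congr rfl fun φ hφ => (Finset.mem_filter.1 hφ).2,
      Finset.sum_const, smul_eq_mul, mul_comm]
  have hval : ∑ φ ∈ P, nn φ = 7620 := by rw [hSum1]; norm_num
  rw [hsumsplit, hc28, hc36] at hval
  rw [hcongr] at hsplit
  have ha36 := haf 36
  have ha28 := haf 28
  refine ⟨?_, ?_, hza⟩ <;> omega
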